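/- arXiv:2305.04894 — 3 statements merged into one kernel-verified Lean document; each statement's English description precedes it below -/
import Mathlib

section
/- Let E and F be Banach spaces over 𝕜 (𝕜 = ℝ or ℂ), let α : E* → F* be a bounded linear bijection, and suppose α admits a preadjoint, i.e. a bounded linear map T : F → E with (α μ)(x) = μ(T x) for all μ ∈ E* and x ∈ F. Then T is an isomorphism of Banach spaces: T is bijective and its inverse T⁻¹ : E → F is bounded. -/
open NormedSpace

/-- If a bounded linear bijection `α : E* → F*` admits a preadjoint
`T : F → E`, then `T` is an isomorphism of Banach spaces: it is bijective
with a bounded (continuous) linear inverse. -/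
theorem stmt2 {𝕜 E F : Type*} [RCLike 𝕜]
    [NormedAddCommGroup E] [NormedSpace 𝕜 E] [CompleteSpace E]
    [NormedAddCommGroup F] [NormedSpace 𝕜 F] [CompleteSpace F]
    (α : StrongDual 𝕜 E →L[𝕜] StrongDual 𝕜 F) (hα : Function.Bijective α)
    (T : F →L[𝕜] E) (hT : ∀ (μ : StrongDual 𝕜 E) (x : F), α μ x = μ (T x)) :
    ∃ g : F ≃L[𝕜] E, ∀ x : F, g x = T x := by
  -- `α` is an isomorphism by the open mapping theorem
  let β : StrongDual 𝕜 E ≃L[𝕜] StrongDual 𝕜 F :=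
    ContinuousLinearEquiv.ofBijective α
      (LinearMap.ker_eq_bot.mpr hα.1) (LinearMap.range_eq_top.mpr hα.2)
  -- `T` is bounded below
  have key : ∀ x : F, ‖x‖ ≤ ‖(β.symm : StrongDual 𝕜 F →L[𝕜] StrongDual 𝕜 E)‖ * ‖T x‖ := by
    intro x
    rcases eq_or_ne x 0 with rfl | hx
    · simp [mul_nonneg (norm_nonneg _) (norm_nonneg _)]
    · obtain ⟨ν, hν1, hνx⟩ := exists_dual_vector 𝕜 x (norm_ne_zero_iff.mpr hx)
      set μ : StrongDual 𝕜 E := β.symm ν with hμ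
      have hβ : α μ = ν := β.apply_symm_apply ν
      have h1 : ν x = μ (T x) := by rw [← hβ]; exact hT μ x
      have h2 : ‖x‖ = ‖ν x‖ := by rw [hνx]; simp
      calc ‖x‖ = ‖μ (T x)‖ := by rw [h2, h1]
        _ ≤ ‖μ‖ * ‖T x‖ := μ.le_opNorm _
        _ ≤ (‖(β.symm : StrongDual 𝕜 F →L[𝕜] StrongDual 𝕜 E)‖ * ‖ν‖) * ‖T x‖ := by
            gcongr; exact (β.symm : StrongDual 𝕜 F →L[𝕜] StrongDual 𝕜 E).le_opNorm ν
        _ = ‖(β.symm : StrongDual 𝕜 F →L[𝕜] StrongDual 𝕜 E)‖ * ‖T x‖ := by rw [hν1, mul_one]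
  have antilip : AntilipschitzWith ‖(β.symm : StrongDual 𝕜 F →L[𝕜] StrongDual 𝕜 E)‖₊ T :=
    ContinuousLinearMap.antilipschitz_of_bound T key
  -- injectivity
  have hinj : Function.Injective T := antilip.injective
  -- closed range
  have hclosed : IsClosed (LinearMap.range (T : F →ₗ[𝕜] E) : Set E) := by
    have : (LinearMap.range (T : F →ₗ[𝕜] E) : Set E) = Set.range T := by
      ext y; simp [LinearMap.mem_range]
    rw [this]
    exact antilip.isClosed_range T.uniformContinuous
  -- surjectivity
  have hsurj : Function.Surjective T := by
    intro y
    by_contra hy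
    have hy' : y ∉ LinearMap.range (T : F →ₗ[𝕜] E) := by
      simpa [LinearMap.mem_range] using hy
    set p : Submodule 𝕜 E := LinearMap.range (T : F →ₗ[𝕜] E) with hp
    haveI : IsClosed (p : Set E) := hclosed
    -- pass to the quotient `E ⧸ p`
    have hmk : (Submodule.Quotient.mk y : E ⧸ p) ≠ 0 := by
      simpa [Submodule.Quotient.mk_eq_zero] using hy'
    obtain ⟨f, hf1, hfy⟩ := exists_dual_vector 𝕜 (Submodule.Quotient.mk y : E ⧸ p) (norm_ne_zero_iff.mpr hmk)
    let π : E →L[𝕜] (E ⧸ p) := ⟨p.mkQ, continuous_quot_mk⟩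
    let μ : StrongDual 𝕜 E := f.comp π
    have hμT : ∀ x : F, μ (T x) = 0 := by
      intro x
      have : (Submodule.Quotient.mk (T x) : E ⧸ p) = 0 := by
        simp [Submodule.Quotient.mk_eq_zero, hp]
      simp only [μ, ContinuousLinearMap.comp_apply]
      have hπ : π (T x) = (0 : E ⧸ p) := this
      rw [hπ, map_zero]
    have hαμ : α μ = 0 := by
      ext x
      simp [hT μ x, hμT x]
    have hμ0 : μ = 0 := hα.1 (by rw [hαμ, map_zero])
    have : f (Submodule.Quotient.mk y : E ⧸ p) = 0 := by
      have := congrArg (fun g : StrongDual 𝕜 E => g y) hμ0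
      exact (by simpa [μ, π] using this : f (π y) = 0)
    rw [hfy] at this
    exact hmk (norm_eq_zero.mp (by exact_mod_cast this))
  refine ⟨(ContinuousLinearEquiv.ofBijective T
    (LinearMap.ker_eq_bot.mpr hinj) (LinearMap.range_eq_top.mpr hsurj)).symm.symm,
    fun x => rfl⟩
end

section
/- Let E and F be Banach spaces over 𝕜 (𝕜 = ℝ or ℂ), let α : E* → F* be a bounded linear bijection, and suppose α admits a preadjoint, i.e. a bounded linear map T : F → E with (α μ)(x) = μ(T x) for all μ ∈ E* and x ∈ F. Then α is a homeomorphism from E* equipped with the weak*-topology σ(E*,E) onto F* equipped with the weak*-topology σ(F*,F); in particular the inverse map α⁻¹ : F* → E* is also weak*-weak*-continuous. -/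
open NormedSpace

/-- If a bounded linear bijection `α : E* → F*` admits a preadjoint
`T : F → E`, then `α` is a homeomorphism from `E*` with the weak*-topology
onto `F*` with the weak*-topology (so in particular `α⁻¹` is also
weak*-weak*-continuous). -/
theorem stmt3 {𝕜 E F : Type*} [RCLike 𝕜]
    [NormedAddCommGroup E] [NormedSpace 𝕜 E] [CompleteSpace E]
    [NormedAddCommGroup F] [NormedSpace 𝕜 F] [CompleteSpace F]
    (α : StrongDual 𝕜 E →L[𝕜] StrongDual 𝕜 F) (hα : Function.Bijective α)
    (T : F →L[𝕜] E) (hT : ∀ (μ : StrongDual 𝕜 E) (x : F), α μ x = μ (T x)) :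
    ∃ h : WeakDual 𝕜 E ≃ₜ WeakDual 𝕜 F,
      ∀ μ : WeakDual 𝕜 E,
        WeakDual.toStrongDual (h μ) = α (WeakDual.toStrongDual μ) := by
  -- Step 1: `T` is bounded below.
  obtain ⟨C, Cpos, hC⟩ := ContinuousLinearMap.exists_preimage_norm_le α hα.2
  have hbelow : ∀ y : F, ‖y‖ ≤ C * ‖T y‖ := by
    intro y
    apply norm_le_dual_bound 𝕜 y (by positivity)
    intro ψ
    obtain ⟨ν, hν, hνnorm⟩ := hC ψ
    calc ‖ψ y‖ = ‖ν (T y)‖ := by rw [← hν, hT]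
      _ ≤ ‖ν‖ * ‖T y‖ := ν.le_opNorm _
      _ ≤ (C * ‖ψ‖) * ‖T y‖ := by gcongr
      _ = (C * ‖T y‖) * ‖ψ‖ := by ring
  have hanti : AntilipschitzWith (Real.toNNReal C) T :=
    T.antilipschitz_of_bound fun y => by
      simpa [Real.coe_toNNReal C Cpos.le] using hbelow y
  have hclosed : IsClosed (Set.range T) := hanti.isClosed_range T.uniformContinuous
  -- Step 2: `T` is surjective.
  have hTsurj : Function.Surjective T := by
    set S : Submodule 𝕜 E := LinearMap.range (T : F →ₗ[𝕜] E) with hS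
    have hSclosed : IsClosed (S : Set E) := by
      simpa [hS, LinearMap.coe_range] using hclosed
    by_contra hns
    rw [← ContinuousLinearMap.coe_coe, ← LinearMap.range_eq_top] at hns
    obtain ⟨x, hx⟩ : ∃ x : E, x ∉ S := by
      by_contra hall
      push_neg at hall
      exact hns (Submodule.eq_top_iff'.mpr hall)
    haveI : IsClosed ((S : Set E)) := hSclosed
    have hxne : (Submodule.Quotient.mk x : E ⧸ S) ≠ 0 := by
      simpa [Submodule.Quotient.mk_eq_zero] using hx
    obtain ⟨g, -, hgx⟩ := exists_dual_vector 𝕜 (Submodule.Quotient.mk x : E ⧸ S) (norm_ne_zero_iff.mpr hxne)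
    have hxnorm : ‖(Submodule.Quotient.mk x : E ⧸ S)‖ ≠ 0 := norm_ne_zero_iff.mpr hxne
    -- the continuous quotient map
    let q : E →L[𝕜] E ⧸ S :=
      LinearMap.mkContinuous S.mkQ 1 fun m => by
        simpa using Submodule.Quotient.norm_mk_le S m
    let μ : StrongDual 𝕜 E := g.comp q
    have hαμ : α μ = 0 := by
      ext y
      have hmem : T y ∈ S := LinearMap.mem_range_self _ y
      have : (Submodule.Quotient.mk (T y) : E ⧸ S) = 0 :=
        (Submodule.Quotient.mk_eq_zero S).mpr hmem
      simp [hT, μ, q, LinearMap.mkContinuous_apply, this]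
    have hμ0 : μ = 0 := hα.1 (by rw [hαμ, map_zero])
    have : g (Submodule.Quotient.mk x : E ⧸ S) = 0 := by
      have := congrArg (fun f : StrongDual 𝕜 E => f x) hμ0
      simpa [μ, q, LinearMap.mkContinuous_apply] using this
    rw [hgx] at this
    exact hxnorm (by exact_mod_cast this)
  -- Step 3: build the homeomorphism.
  let e : WeakDual 𝕜 E ≃ WeakDual 𝕜 F := Equiv.ofBijective (fun μ => α μ) hα
  have hcont : Continuous (e : WeakDual 𝕜 E → WeakDual 𝕜 F) := by
    apply WeakDual.continuous_of_continuous_eval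
    intro y
    have : (fun μ : WeakDual 𝕜 E => e μ y) = fun μ : WeakDual 𝕜 E => μ (T y) := by
      funext μ
      exact hT μ y
    rw [this]
    exact WeakDual.eval_continuous (T y)
  have hcont' : Continuous (e.symm : WeakDual 𝕜 F → WeakDual 𝕜 E) := by
    apply WeakDual.continuous_of_continuous_eval
    intro x
    obtain ⟨y, hy⟩ := hTsurj x
    have key : (fun ν : WeakDual 𝕜 F => e.symm ν x) = fun ν : WeakDual 𝕜 F => ν y := by
      funext ν
      have h1 : α (e.symm ν) = ν := e.apply_symm_apply ν
      calc (e.symm ν) x = (e.symm ν) (T y) := by rw [hy]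
        _ = α (e.symm ν) y := (hT _ y).symm
        _ = ν y := by rw [h1]; rfl
    rw [key]
    exact WeakDual.eval_continuous y
  exact ⟨⟨e, hcont, hcont'⟩, fun μ => rfl⟩
end

section
/- Let A be a Banach algebra (over ℝ or ℂ, not necessarily unital) which has a weak bounded left approximate identity of bound C, i.e. there is a net (e_i)_{i∈I} in A with ‖e_i‖ ≤ C for all i such that μ(e_i a − a) → 0 for every a ∈ A and every continuous linear functional μ ∈ A*. Then A has a bounded left approximate identity of the same bound C, i.e. there is a net (f_j)_{j∈J} in A with ‖f_j‖ ≤ C for all j such that ‖f_j a − a‖ → 0 for every a ∈ A. -/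
open Filter

section Aux

variable {𝕜 A : Type*} [RCLike 𝕜] [NonUnitalNormedRing A]
    [NormedSpace 𝕜 A] [IsScalarTower 𝕜 A A] [SMulCommClass 𝕜 A A]
    [NormedSpace ℝ A] [IsScalarTower ℝ 𝕜 A] [IsScalarTower ℝ A A]

/-- Key step: from a weak bounded left approximate identity, for every finite set `s`
and `ε > 0` there is an element of the convex hull of the net which is an
`ε`-approximate identity for all elements of `s`. -/
theorem exists_convex_approx (ι : Type) [Nonempty ι] [Preorder ι]
    [IsDirected ι (· ≤ ·)] (e : ι → A)
    (hw : ∀ (a : A) (μ : A →L[𝕜] 𝕜),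
      Tendsto (fun i => μ (e i * a - a)) atTop (nhds (0 : 𝕜)))
    (s : Finset A) {ε : ℝ} (hε : 0 < ε) :
    ∃ f ∈ convexHull ℝ (Set.range e), ∀ a ∈ s, ‖f * a - a‖ < ε := by
  classical
  -- work in the product space `E = s → A`
  set σ := {x // x ∈ s}
  set Φ : A → (σ → A) := fun t a => t * (a : A) - (a : A) with hΦ
  set K : Set (σ → A) := Φ '' (convexHull ℝ (Set.range e)) with hK
  have hKconv : Convex ℝ K := by
    rintro x ⟨t₁, ht₁, rfl⟩ y ⟨t₂, ht₂, rfl⟩ p q hp hq hpq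
    refine ⟨p • t₁ + q • t₂, (convex_convexHull ℝ _) ht₁ ht₂ hp hq hpq, ?_⟩
    funext a
    show (p • t₁ + q • t₂) * (a : A) - a = p • (t₁ * a - a) + q • (t₂ * a - a)
    have h1 : (p • t₁ + q • t₂) * (a : A) = p • (t₁ * (a : A)) + q • (t₂ * (a : A)) := by
      rw [add_mul, smul_mul_assoc, smul_mul_assoc]
    have h2 : p • (a : A) + q • (a : A) = (a : A) := by
      rw [← add_smul, hpq, one_smul]
    rw [h1, smul_sub, smul_sub, sub_add_sub_comm, h2]
  have hmem : ∀ i, Φ (e i) ∈ K :=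
    fun i => ⟨e i, subset_convexHull ℝ _ ⟨i, rfl⟩, rfl⟩
  -- 0 is in the norm closure of K, by Hahn–Banach separation
  have h0 : (0 : σ → A) ∈ closure K := by
    by_contra h0
    obtain ⟨φ, u, hu0, hu⟩ :=
      geometric_hahn_banach_point_closed hKconv.closure isClosed_closure h0
    rw [map_zero] at hu0
    -- the composition of φ with each coordinate inclusion tends to 0 along the net
    have htend : Tendsto (fun i => φ (Φ (e i))) atTop (nhds 0) := by
      have hdecomp : ∀ i, φ (Φ (e i)) =
          ∑ a : σ, φ (Pi.single a (e i * (a : A) - (a : A))) := by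
        intro i
        rw [← map_sum]
        congr 1
        funext b
        rw [Finset.sum_apply]
        exact (Fintype.sum_pi_single b fun a => e i * (a : A) - (a : A)).symm
      simp only [hdecomp]
      have hz : (0 : ℝ) = ∑ _a : σ, (0 : ℝ) := by simp
      rw [hz]
      apply tendsto_finset_sum
      intro a _
      -- the functional `x ↦ φ (Pi.single a x)` is continuous linear
      set ψ : A →L[ℝ] ℝ :=
        φ.comp ⟨LinearMap.single ℝ (fun _ : σ => A) a,
          continuous_single (A := fun _ : σ => A) a⟩ with hψ
      have hψa : ∀ x : A, φ (Pi.single a x) = ψ x := fun x => rfl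
      simp only [hψa]
      -- extend ψ to a 𝕜-linear functional
      set μ : A →L[𝕜] 𝕜 := ContinuousLinearMap.extendTo𝕜' (𝕜 := 𝕜) ψ
      have hre : ∀ x : A, RCLike.re (μ x) = ψ x := fun x =>
        LinearMap.extendTo𝕜'_apply_re (𝕜 := 𝕜) ψ.toLinearMap x
      have hc := (RCLike.continuous_re (K := 𝕜)).continuousAt.tendsto.comp
        (hw (a : A) μ)
      simp only [Function.comp_def, hre, map_zero] at hc
      exact hc
    have hbot : (atTop : Filter ι).NeBot :=
      atTop_neBot_iff.mpr ⟨‹Nonempty ι›, ‹IsDirected ι (· ≤ ·)›⟩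
    have hlt : ∀ᶠ i in (atTop : Filter ι), φ (Φ (e i)) < u :=
      htend.eventually (eventually_lt_nhds hu0)
    obtain ⟨i, hi⟩ := hlt.exists
    exact absurd (hu _ (subset_closure (hmem i))) (not_lt.mpr hi.le)
  -- extract the approximate identity element
  rw [Metric.mem_closure_iff] at h0
  obtain ⟨y, ⟨f, hf, rfl⟩, hy⟩ := h0 ε hε
  refine ⟨f, hf, fun a ha => ?_⟩
  calc ‖f * a - a‖ = ‖Φ f ⟨a, ha⟩‖ := rfl
    _ ≤ ‖Φ f‖ := norm_le_pi_norm (Φ f) ⟨a, ha⟩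
    _ = dist 0 (Φ f) := by rw [dist_comm, dist_zero_right]
    _ < ε := hy

/-- Every element of the convex hull of the range of `e` is a finite
linear combination of values of `e`. -/
theorem exists_finsupp_of_mem_convexHull (ι : Type) (e : ι → A)
    {f : A} (hf : f ∈ convexHull ℝ (Set.range e)) :
    ∃ w : ι →₀ ℝ, Finsupp.linearCombination ℝ e w = f := by
  rw [convexHull_eq] at hf
  obtain ⟨κ, t, wt, z, _hw0, hw1, hz, hcm⟩ := hf
  choose g hg using fun j (hj : j ∈ t) => hz j hj
  refine ⟨∑ j ∈ t.attach, Finsupp.single (g j.1 j.2) (wt j.1), ?_⟩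
  rw [map_sum]
  have : ∀ j ∈ t.attach,
      Finsupp.linearCombination ℝ e (Finsupp.single (g j.1 j.2) (wt j.1)) =
        wt j.1 • z j.1 := by
    intro j _
    rw [Finsupp.linearCombination_single, hg j.1 j.2]
  rw [Finset.sum_congr rfl this, ← hcm, Finset.centerMass_eq_of_sum_1 _ _ hw1,
    Finset.sum_attach t (fun j => wt j • z j)]

end Aux

/-- Index structure for the approximate-identity net: a point together with a
constraint set containing it, drawn from a fixed family `𝒱`. -/
structure ApproxIndex (W : Type) (𝒱 : Set (Set W)) : Type where
  w : W
  U : Set W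
  hmem : w ∈ U
  hU : U ∈ 𝒱

/-- A Banach algebra (not necessarily unital) with a weak bounded left
approximate identity of bound `C` (a net `(e_i)` over a nonempty directed
index set with `‖e_i‖ ≤ C` and `μ (e_i * a - a) → 0` for every `a` and every
continuous linear functional `μ`) has a bounded left approximate identity of
the same bound `C` (a net `(f_j)` with `‖f_j‖ ≤ C` and `‖f_j * a - a‖ → 0`
for every `a`). -/
theorem stmt4 {𝕜 A : Type*} [RCLike 𝕜] [NonUnitalNormedRing A]
    [NormedSpace 𝕜 A] [IsScalarTower 𝕜 A A] [SMulCommClass 𝕜 A A]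
    [CompleteSpace A] (C : ℝ)
    (h : ∃ (ι : Type) (_ : Nonempty ι) (pre : Preorder ι),
      haveI := pre
      IsDirected ι (· ≤ ·) ∧
      ∃ e : ι → A, (∀ i, ‖e i‖ ≤ C) ∧
        ∀ (a : A) (μ : A →L[𝕜] 𝕜),
          Tendsto (fun i => μ (e i * a - a)) atTop (nhds (0 : 𝕜))) :
    ∃ (ι : Type) (_ : Nonempty ι) (pre : Preorder ι),
      haveI := pre
      IsDirected ι (· ≤ ·) ∧
      ∃ f : ι → A, (∀ j, ‖f j‖ ≤ C) ∧
        ∀ a : A,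
          Tendsto (fun j => ‖f j * a - a‖) atTop (nhds (0 : ℝ)) := by
  classical
  obtain ⟨ι, hne, pre, hdir, e, hbd, hw⟩ := h
  letI := pre
  haveI := hdir
  haveI := hne
  -- set up the real scalar structure on A
  letI : NormedSpace ℝ A := NormedSpace.restrictScalars ℝ 𝕜 A
  haveI : IsScalarTower ℝ 𝕜 A := ⟨fun r k x => by
    show (r • k) • x = algebraMap ℝ 𝕜 r • (k • x)
    rw [Algebra.smul_def, mul_smul]⟩
  haveI : IsScalarTower ℝ A A := ⟨fun r x y => by
    show (algebraMap ℝ 𝕜 r • x) • y = algebraMap ℝ 𝕜 r • (x • y)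
    exact smul_assoc _ x y⟩
  -- the hull of the range is contained in the ball of radius C
  have hhull : convexHull ℝ (Set.range e) ⊆ Metric.closedBall (0 : A) C := by
    apply convexHull_min _ (convex_closedBall 0 C)
    rintro x ⟨i, rfl⟩
    simpa [Metric.mem_closedBall, dist_zero_right] using hbd i
  -- weight space (lives in `Type 0`) and the evaluation map
  set W : Type := ι →₀ ℝ with hW
  set c : W → A := fun w => Finsupp.linearCombination ℝ e w with hc
  -- constraint sets
  set V : Finset A × ℕ → Set W := fun p =>
    {w : W | ‖c w‖ ≤ C ∧ ∀ a ∈ p.1, ‖c w * a - a‖ < 1 / (p.2 + 1 : ℝ)} with hV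
  have hVne : ∀ p, (V p).Nonempty := by
    rintro ⟨s, n⟩
    obtain ⟨f, hfhull, hfapp⟩ :=
      exists_convex_approx (𝕜 := 𝕜) ι e hw s
        (ε := 1 / (n + 1 : ℝ)) (by positivity)
    obtain ⟨w, hwc⟩ := exists_finsupp_of_mem_convexHull ι e hfhull
    refine ⟨w, ?_, ?_⟩
    · show ‖c w‖ ≤ C
      rw [hc]
      simp only [hwc]
      simpa [dist_zero_right] using hhull hfhull
    · intro a ha
      show ‖c w * a - a‖ < _
      rw [hc]; simp only [hwc]
      exact hfapp a ha
  -- the index type, in `Type 0`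
  set J : Type := ApproxIndex W (Set.range V) with hJ
  haveI : Nonempty J := by
    obtain ⟨w, hw'⟩ := hVne (∅, 0)
    exact ⟨⟨w, V (∅, 0), hw', ⟨(∅, 0), rfl⟩⟩⟩
  letI preJ : Preorder J :=
    { le := fun p q => q.U ⊆ p.U
      le_refl := fun p => Set.Subset.refl _
      le_trans := fun p q r hpq hqr => Set.Subset.trans hqr hpq
      lt := fun p q => q.U ⊆ p.U ∧ ¬p.U ⊆ q.U
      lt_iff_le_not_ge := fun _ _ => Iff.rfl }
  have hmono : ∀ p q : Finset A × ℕ, p.1 ⊆ q.1 → p.2 ≤ q.2 → V q ⊆ V p := by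
    rintro ⟨s, n⟩ ⟨s', n'⟩ hs hn w hw'
    refine ⟨hw'.1, fun a ha => lt_of_lt_of_le (hw'.2 a (hs ha)) ?_⟩
    apply one_div_le_one_div_of_le (by positivity)
    have : (n : ℝ) ≤ n' := Nat.cast_le.mpr hn
    linarith
  haveI hdirJ : IsDirected J (· ≤ ·) := by
    constructor
    rintro ⟨w₁, U₁, hw₁, p₁, hp₁⟩ ⟨w₂, U₂, hw₂, p₂, hp₂⟩
    set p₃ : Finset A × ℕ := (p₁.1 ∪ p₂.1, max p₁.2 p₂.2) with hp₃
    obtain ⟨w₃, hw₃⟩ := hVne p₃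
    refine ⟨⟨w₃, V p₃, hw₃, ⟨p₃, rfl⟩⟩, ?_, ?_⟩
    · show V p₃ ⊆ U₁
      rw [← hp₁]
      exact hmono p₁ p₃ Finset.subset_union_left (le_max_left _ _)
    · show V p₃ ⊆ U₂
      rw [← hp₂]
      exact hmono p₂ p₃ Finset.subset_union_right (le_max_right _ _)
  refine ⟨J, inferInstance, preJ, hdirJ, fun j => c j.w, ?_, ?_⟩
  · rintro ⟨w, U, hwU, p, hp⟩
    have : w ∈ V p := hp ▸ hwU
    exact this.1
  · intro a
    rw [Metric.tendsto_nhds]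
    intro ε hε
    obtain ⟨N, hN⟩ := exists_nat_one_div_lt hε
    obtain ⟨w₀, hw₀⟩ := hVne ({a}, N)
    set j₀ : J := ⟨w₀, V ({a}, N), hw₀, ⟨({a}, N), rfl⟩⟩ with hj₀
    have hIci : Set.Ici j₀ ∈ (atTop : Filter J) := Ici_mem_atTop j₀
    apply Filter.mem_of_superset hIci
    rintro ⟨w, U, hwU, p, hp⟩ hj
    have hsub : U ⊆ V ({a}, N) := hj
    have hw' : w ∈ V ({a}, N) := hsub hwU
    have h1 : ‖c w * a - a‖ < 1 / (N + 1 : ℝ) :=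
      hw'.2 a (Finset.mem_singleton_self a)
    show dist ‖c w * a - a‖ 0 < ε
    rw [Real.dist_eq, sub_zero, abs_of_nonneg (norm_nonneg _)]
    linarith
end
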